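/- Let 𝔏 be a finite set of lines in ℝ³ and let 𝒴 be a finite set of irreducible algebraic surfaces in ℝ³, each of degree at most D, such that each surface in 𝒴 contains at least A lines of 𝔏, and such that any two distinct surfaces in 𝒴 share at most D² common lines of 𝔏. If A > 2D·|𝔏|^{1/2}, then |𝒴| ≤ 2·|𝔏|/A. -/

import Mathlib

def IsLine (s : Set (Fin 3 → ℝ)) : Prop :=
  ∃ a v : Fin 3 → ℝ, v ≠ 0 ∧ s = {x | ∃ t : ℝ, x = a + t • v}

def zeroSet (Q : MvPolynomial (Fin 3) ℝ) : Set (Fin 3 → ℝ) :=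
  {x | MvPolynomial.eval x Q = 0}

private lemma nat_ineq (d : ℕ) : 2 * d ≤ 2 + d * (d - 1) := by
  rcases d with _ | _ | m
  · simp
  · simp
  · have h : m + 1 + 1 - 1 = m + 1 := rfl
    rw [h]
    have h2 : (m + 1 + 1) * (m + 1) = m * m + 3 * m + 2 := by ring
    omega

set_option maxHeartbeats 1000000 in
theorem stmt2 (𝔏 𝒴 : Finset (Set (Fin 3 → ℝ))) (hlines : ∀ ℓ ∈ 𝔏, IsLine ℓ)
    (D A : ℝ) (hD : 0 < D) (hA : 0 < A)
    (hsurf : ∀ Z ∈ 𝒴, ∃ Q : MvPolynomial (Fin 3) ℝ,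
      Irreducible Q ∧ (Q.totalDegree : ℝ) ≤ D ∧ Z = zeroSet Q)
    (hmany : ∀ Z ∈ 𝒴, A ≤ ({ℓ | ℓ ∈ 𝔏 ∧ ℓ ⊆ Z}.ncard : ℝ))
    (hbez : ∀ Z₁ ∈ 𝒴, ∀ Z₂ ∈ 𝒴, Z₁ ≠ Z₂ →
      ({ℓ | ℓ ∈ 𝔏 ∧ ℓ ⊆ Z₁ ∧ ℓ ⊆ Z₂}.ncard : ℝ) ≤ D ^ 2)
    (hbig : A > 2 * D * Real.sqrt (𝔏.card)) :
    (𝒴.card : ℝ) ≤ 2 * (𝔏.card : ℝ) / A := by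
  classical
  set L : ℝ := (𝔏.card : ℝ) with hLdef
  have hL0 : 0 ≤ L := by positivity
  -- rewrite ncards as finset cards
  have hset : ∀ p : Set (Fin 3 → ℝ) → Prop,
      {ℓ | ℓ ∈ 𝔏 ∧ p ℓ}.ncard = (𝔏.filter p).card := by
    intro p
    have : {ℓ | ℓ ∈ 𝔏 ∧ p ℓ} = ↑(𝔏.filter p) := by
      ext ℓ; simp [Finset.mem_filter]
    rw [this, Set.ncard_coe_finset]
  by_contra hcon
  push_neg at hcon
  have hdivnn : 0 ≤ 2 * L / A := by positivity
  have h𝒴pos : 0 < 𝒴.card := by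
    by_contra h
    push_neg at h
    have h0 : 𝒴.card = 0 := Nat.le_zero.mp h
    rw [h0] at hcon
    push_cast at hcon
    linarith
  -- L ≥ A > 0
  obtain ⟨Z₀, hZ₀⟩ := Finset.card_pos.mp h𝒴pos
  have hAL : A ≤ L := by
    have h1 := hmany Z₀ hZ₀
    rw [hset] at h1
    have h2 : (𝔏.filter fun ℓ => ℓ ⊆ Z₀).card ≤ 𝔏.card := Finset.card_filter_le _ _
    calc A ≤ _ := h1
      _ ≤ L := by rw [hLdef]; exact_mod_cast h2
  have hLpos : 0 < L := lt_of_lt_of_le hA hAL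
  -- choose k
  set k : ℕ := ⌊2 * L / A⌋₊ + 1 with hkdef
  have hk𝒴 : k ≤ 𝒴.card := by
    have : ⌊2 * L / A⌋₊ < 𝒴.card := by
      rw [Nat.floor_lt hdivnn]; exact hcon
    omega
  have hkgt : 2 * L / A < (k : ℝ) := by
    push_cast [hkdef]; exact Nat.lt_floor_add_one _
  have hkle : (k : ℝ) - 1 ≤ 2 * L / A := by
    push_cast [hkdef]; simpa using Nat.floor_le hdivnn
  obtain ⟨S, hSsub, hScard⟩ := Finset.exists_subset_card_eq hk𝒴
  -- multiplicity of each line among chosen surfaces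
  set d : Set (Fin 3 → ℝ) → ℕ := fun ℓ => (S.filter fun Z => ℓ ⊆ Z).card with hddef
  -- Key 1 : k * A ≤ ∑ d
  have key1 : (k : ℝ) * A ≤ ∑ ℓ ∈ 𝔏, (d ℓ : ℝ) := by
    have swap : ∑ Z ∈ S, ((𝔏.filter fun ℓ => ℓ ⊆ Z).card : ℝ) = ∑ ℓ ∈ 𝔏, (d ℓ : ℝ) := by
      simp only [Finset.card_filter, hddef]
      push_cast
      rw [Finset.sum_comm]
    have lower : (k : ℝ) * A ≤ ∑ Z ∈ S, ((𝔏.filter fun ℓ => ℓ ⊆ Z).card : ℝ) := by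
      have : ∀ Z ∈ S, A ≤ ((𝔏.filter fun ℓ => ℓ ⊆ Z).card : ℝ) := by
        intro Z hZ
        have := hmany Z (hSsub hZ)
        rwa [hset] at this
      calc (k : ℝ) * A = S.card • A := by rw [hScard]; simp [nsmul_eq_mul]
        _ ≤ ∑ Z ∈ S, ((𝔏.filter fun ℓ => ℓ ⊆ Z).card : ℝ) := Finset.card_nsmul_le_sum S _ A this
    linarith [lower, swap.ge]
  -- Key 2 : ∑ d (d-1) ≤ k (k-1) D²
  have key2 : ∑ ℓ ∈ 𝔏, ((d ℓ * (d ℓ - 1) : ℕ) : ℝ) ≤ (k : ℝ) * ((k : ℝ) - 1) * D ^ 2 := by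
    have hBnat : ∑ Z₁ ∈ S, ∑ Z₂ ∈ S.erase Z₁, (𝔏.filter fun ℓ => ℓ ⊆ Z₁ ∧ ℓ ⊆ Z₂).card
        = ∑ ℓ ∈ 𝔏, d ℓ * (d ℓ - 1) := by
      simp only [Finset.card_filter]
      have e1 : ∀ Z₁ ∈ S, (∑ Z₂ ∈ S.erase Z₁, ∑ ℓ ∈ 𝔏, if ℓ ⊆ Z₁ ∧ ℓ ⊆ Z₂ then 1 else 0)
          = ∑ ℓ ∈ 𝔏, ∑ Z₂ ∈ S.erase Z₁, if ℓ ⊆ Z₁ ∧ ℓ ⊆ Z₂ then 1 else 0 :=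
        fun Z₁ _ => Finset.sum_comm
      rw [Finset.sum_congr rfl e1, Finset.sum_comm]
      refine Finset.sum_congr rfl fun ℓ _ => ?_
      have step : ∀ Z₁ ∈ S, (∑ Z₂ ∈ S.erase Z₁, if ℓ ⊆ Z₁ ∧ ℓ ⊆ Z₂ then 1 else 0)
          = if ℓ ⊆ Z₁ then d ℓ - 1 else 0 := by
        intro Z₁ hZ₁
        by_cases h : ℓ ⊆ Z₁
        · simp only [h, true_and, if_true]
          rw [← Finset.card_filter, Finset.filter_erase]
          rw [Finset.card_erase_of_mem (Finset.mem_filter.mpr ⟨hZ₁, h⟩)]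
        · simp [h]
      rw [Finset.sum_congr rfl step, ← Finset.sum_filter, Finset.sum_const, hddef,
        smul_eq_mul]
    have cast1 : ∑ ℓ ∈ 𝔏, ((d ℓ * (d ℓ - 1) : ℕ) : ℝ)
        = ∑ Z₁ ∈ S, ∑ Z₂ ∈ S.erase Z₁, ((𝔏.filter fun ℓ => ℓ ⊆ Z₁ ∧ ℓ ⊆ Z₂).card : ℝ) := by
      exact_mod_cast congrArg (Nat.cast : ℕ → ℝ) hBnat.symm
    rw [cast1]
    have bound : ∀ Z₁ ∈ S, ∑ Z₂ ∈ S.erase Z₁, ((𝔏.filter fun ℓ => ℓ ⊆ Z₁ ∧ ℓ ⊆ Z₂).card : ℝ)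
        ≤ ((k : ℝ) - 1) * D ^ 2 := by
      intro Z₁ hZ₁
      have : ∀ Z₂ ∈ S.erase Z₁, ((𝔏.filter fun ℓ => ℓ ⊆ Z₁ ∧ ℓ ⊆ Z₂).card : ℝ) ≤ D ^ 2 := by
        intro Z₂ hZ₂
        have hne : Z₁ ≠ Z₂ := (Finset.ne_of_mem_erase hZ₂).symm
        have := hbez Z₁ (hSsub hZ₁) Z₂ (hSsub (Finset.mem_of_mem_erase hZ₂)) hne
        rw [hset] at this
        convert this using 4
      calc ∑ Z₂ ∈ S.erase Z₁, ((𝔏.filter fun ℓ => ℓ ⊆ Z₁ ∧ ℓ ⊆ Z₂).card : ℝ)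
          ≤ ∑ _Z₂ ∈ S.erase Z₁, D ^ 2 := Finset.sum_le_sum this
        _ = ((S.erase Z₁).card : ℝ) * D ^ 2 := by rw [Finset.sum_const, nsmul_eq_mul]
        _ = ((k : ℝ) - 1) * D ^ 2 := by
            rw [Finset.card_erase_of_mem hZ₁, hScard]
            have hk1 : 1 ≤ k := by omega
            push_cast [Nat.cast_sub hk1]
            ring
    calc ∑ Z₁ ∈ S, ∑ Z₂ ∈ S.erase Z₁, ((𝔏.filter fun ℓ => ℓ ⊆ Z₁ ∧ ℓ ⊆ Z₂).card : ℝ)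
        ≤ ∑ _Z₁ ∈ S, ((k : ℝ) - 1) * D ^ 2 := Finset.sum_le_sum bound
      _ = (k : ℝ) * ((k : ℝ) - 1) * D ^ 2 := by
          rw [Finset.sum_const, nsmul_eq_mul, hScard]; ring
  -- pointwise : d ≤ 1 + d(d-1)/2
  have ptwise : ∑ ℓ ∈ 𝔏, (d ℓ : ℝ) ≤ L + (∑ ℓ ∈ 𝔏, ((d ℓ * (d ℓ - 1) : ℕ) : ℝ)) / 2 := by
    have h : ∀ ℓ ∈ 𝔏, (d ℓ : ℝ) ≤ 1 + ((d ℓ * (d ℓ - 1) : ℕ) : ℝ) / 2 := by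
      intro ℓ _
      have := nat_ineq (d ℓ)
      have : ((2 * d ℓ : ℕ) : ℝ) ≤ ((2 + d ℓ * (d ℓ - 1) : ℕ) : ℝ) := by exact_mod_cast this
      push_cast at this ⊢
      linarith
    calc ∑ ℓ ∈ 𝔏, (d ℓ : ℝ) ≤ ∑ ℓ ∈ 𝔏, (1 + ((d ℓ * (d ℓ - 1) : ℕ) : ℝ) / 2) :=
          Finset.sum_le_sum h
      _ = L + (∑ ℓ ∈ 𝔏, ((d ℓ * (d ℓ - 1) : ℕ) : ℝ)) / 2 := by
          rw [Finset.sum_add_distrib, Finset.sum_const, nsmul_eq_mul, ← Finset.sum_div]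
          simp [hLdef]
  -- combine
  have main : (k : ℝ) * A ≤ L + (k : ℝ) * ((k : ℝ) - 1) * D ^ 2 / 2 := by
    calc (k : ℝ) * A ≤ ∑ ℓ ∈ 𝔏, (d ℓ : ℝ) := key1
      _ ≤ L + (∑ ℓ ∈ 𝔏, ((d ℓ * (d ℓ - 1) : ℕ) : ℝ)) / 2 := ptwise
      _ ≤ L + (k : ℝ) * ((k : ℝ) - 1) * D ^ 2 / 2 := by linarith [key2]
  -- final contradiction
  have hs : Real.sqrt (𝔏.card) ^ 2 = L := Real.sq_sqrt hL0
  have hsnn : 0 ≤ Real.sqrt (𝔏.card : ℝ) := Real.sqrt_nonneg _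
  have hA2 : 4 * L * D ^ 2 < A ^ 2 := by
    have h2Ds : 0 ≤ 2 * D * Real.sqrt (𝔏.card) := by positivity
    nlinarith [hbig, hs]
  have hkA : 2 * L < (k : ℝ) * A := by
    rw [div_lt_iff₀ hA] at hkgt; linarith
  have hk1A : ((k : ℝ) - 1) * A ≤ 2 * L := by
    rw [← le_div_iff₀ hA]; exact hkle
  have hkpos : (0 : ℝ) < k := by positivity
  -- k A² ≤ L A + k L D²
  have m1 : (k : ℝ) * A * A ≤ (L + (k : ℝ) * ((k : ℝ) - 1) * D ^ 2 / 2) * A :=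
    mul_le_mul_of_nonneg_right main hA.le
  have m2 : ((k : ℝ) * D ^ 2 / 2) * (((k : ℝ) - 1) * A) ≤ ((k : ℝ) * D ^ 2 / 2) * (2 * L) :=
    mul_le_mul_of_nonneg_left hk1A (by positivity)
  have step1 : (k : ℝ) * A ^ 2 ≤ L * A + (k : ℝ) * L * D ^ 2 := by nlinarith [m1, m2]
  have hALD : 0 < A ^ 2 - L * D ^ 2 := by
    have := mul_pos hLpos (pow_pos hD 2)
    linarith
  have t1 : (k : ℝ) * A ^ 2 * A ≤ (L * A + (k : ℝ) * L * D ^ 2) * A :=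
    mul_le_mul_of_nonneg_right step1 hA.le
  have t2 : 2 * L * (A ^ 2 - L * D ^ 2) < (k : ℝ) * A * (A ^ 2 - L * D ^ 2) :=
    mul_lt_mul_of_pos_right hkA hALD
  have t3 : L * (4 * L * D ^ 2) < L * A ^ 2 := mul_lt_mul_of_pos_left hA2 hLpos
  nlinarith [t1, t2, t3, mul_pos hLpos (pow_pos hD 2)]
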